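/- Fix a real number a > 1 and define m_k = (a^{k+1} − a^{−(k+1)})/(a − a^{−1}) for k ∈ ℕ. Then there exists a unique bounded linear operator T on ℓ²(ℕ; ℂ) satisfying T e_k = √(m_1/2)·(√(m_k/m_{k+1})·e_{k+1} − √(m_{k+1}/m_k)·e_k) for every k ∈ ℕ, and T is bijective with bounded inverse S determined by S e_k = −m_k·√(2/m_1)·Σ_{i=k}^∞ e_i/√(m_i·m_{i+1}), the series converging in ℓ²(ℕ; ℂ). -/

import Mathlib

/-- The Hilbert space `ℓ²(ℕ; ℂ)`. -/
noncomputable abbrev L2N : Type := lp (fun _ : ℕ => ℂ) 2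

open scoped ENNReal

lemma rpow_two_eq' (x : ℝ) : x ^ ((2:ℝ≥0∞)).toReal = x ^ (2:ℕ) := by
  rw [show ((2:ℝ≥0∞)).toReal = ((2:ℕ):ℝ) by norm_num, Real.rpow_natCast]

lemma lp2_summable (g : L2N) : Summable (fun i => ‖g i‖^(2:ℕ)) := by
  have := (lp.memℓp g).summable (by norm_num : 0 < ((2:ℝ≥0∞)).toReal)
  simpa [rpow_two_eq'] using this

lemma memℓp_two_of {f : ℕ → ℂ} (h : Summable fun i => ‖f i‖^(2:ℕ)) : Memℓp f 2 :=
  memℓp_gen (by simpa [rpow_two_eq'] using h)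

lemma lp2_norm_le (f : L2N) (C : ℝ) (hC : 0 ≤ C) (h : (∑' i, ‖f i‖^(2:ℕ)) ≤ C^(2:ℕ)) :
    ‖f‖ ≤ C := by
  apply lp.norm_le_of_tsum_le (by norm_num : 0 < ((2:ℝ≥0∞)).toReal) hC
  simpa [rpow_two_eq'] using h

lemma sq_summable_of_le {f : ℕ → ℂ} {C : ℝ} (x : L2N) (hb : ∀ j, ‖f j‖ ≤ C * ‖x j‖) :
    Summable (fun i => ‖f i‖^(2:ℕ)) := by
  apply Summable.of_nonneg_of_le (fun i => by positivity)
    (fun i => ?_) ((lp2_summable x).mul_left (C^2))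
  calc ‖f i‖^2 ≤ (C * ‖x i‖)^2 := pow_le_pow_left₀ (norm_nonneg _) (hb i) 2
    _ = C^2 * ‖x i‖^2 := by ring

lemma memℓp_two_of_le {f : ℕ → ℂ} {C : ℝ} (x : L2N) (hb : ∀ j, ‖f j‖ ≤ C * ‖x j‖) :
    Memℓp f 2 := memℓp_two_of (sq_summable_of_le x hb)

lemma norm_est {f : ℕ → ℂ} {C : ℝ} (hC : 0 ≤ C) (hf : Memℓp f 2) (x : L2N)
    (hb : ∀ j, ‖f j‖ ≤ C * ‖x j‖) : ‖(⟨f, hf⟩ : L2N)‖ ≤ C * ‖x‖ := by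
  apply lp2_norm_le _ _ (mul_nonneg hC (norm_nonneg _))
  calc (∑' i, ‖f i‖^(2:ℕ)) ≤ ∑' i, C^2 * ‖x i‖^(2:ℕ) := by
        apply Summable.tsum_le_tsum (fun i => ?_) (sq_summable_of_le x hb)
          ((lp2_summable x).mul_left (C^2))
        calc ‖f i‖^2 ≤ (C * ‖x i‖)^2 := pow_le_pow_left₀ (norm_nonneg _) (hb i) 2
          _ = C^2 * ‖x i‖^2 := by ring
    _ = C^2 * ∑' i, ‖x i‖^(2:ℕ) := by rw [tsum_mul_left]
    _ = C^2 * ‖x‖^2 := by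
        congr 1
        have := lp.norm_rpow_eq_tsum (p := 2) (by norm_num) x
        simp only [rpow_two_eq'] at this
        exact this.symm
    _ = (C * ‖x‖)^2 := by ring

lemma exists_diag (w : ℕ → ℝ) (C : ℝ) (hC : 0 ≤ C) (hw : ∀ j, |w j| ≤ C) :
    ∃ D : L2N →L[ℂ] L2N, ‖D‖ ≤ C ∧ ∀ (x : L2N) (j : ℕ), D x j = w j * x j := by
  have hb : ∀ (x : L2N) (j : ℕ), ‖(w j : ℂ) * x j‖ ≤ C * ‖x j‖ := fun x j => by
    rw [norm_mul, Complex.norm_real]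
    exact mul_le_mul_of_nonneg_right (hw j) (norm_nonneg _)
  let L : L2N →ₗ[ℂ] L2N :=
    { toFun := fun x => ⟨fun j => (w j : ℂ) * x j, memℓp_two_of_le x (hb x)⟩
      map_add' := fun x y => by
        apply lp.ext; funext j
        simp only [lp.coeFn_add, Pi.add_apply]
        exact mul_add _ _ _
      map_smul' := fun c x => by
        apply lp.ext; funext j
        simp only [lp.coeFn_smul, Pi.smul_apply, RingHom.id_apply, smul_eq_mul]
        ring }
  refine ⟨L.mkContinuous C (fun x => norm_est hC _ x (hb x)), L.mkContinuous_norm_le hC _,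
    fun x j => rfl⟩

lemma exists_shift (w : ℕ → ℝ) (C : ℝ) (hC : 0 ≤ C) (hw : ∀ j, |w j| ≤ C) :
    ∃ N : L2N →L[ℂ] L2N, ‖N‖ ≤ C ∧ ∀ (x : L2N),
      N x 0 = 0 ∧ ∀ j, N x (j+1) = w j * x j := by
  set F : (ℕ → ℂ) → ℕ → ℂ := fun x j => Nat.casesOn j 0 (fun i => (w i : ℂ) * x i) with hF
  have hb : ∀ (x : L2N) (j : ℕ), ‖F x j‖ ≤ C * ‖x j‖ → True := fun _ _ _ => trivial
  have key : ∀ (x : L2N), Summable (fun j => ‖F x j‖^(2:ℕ)) ∧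
      (∑' j, ‖F x j‖^(2:ℕ)) ≤ C^2 * ∑' i, ‖x i‖^(2:ℕ) := by
    intro x
    have hs : Summable (fun i => C^2 * ‖x i‖^(2:ℕ)) := (lp2_summable x).mul_left (C^2)
    have hle : ∀ i, ‖F x (i+1)‖^(2:ℕ) ≤ C^2 * ‖x i‖^(2:ℕ) := by
      intro i
      have : ‖(w i : ℂ) * x i‖ ≤ C * ‖x i‖ := by
        rw [norm_mul, Complex.norm_real]
        exact mul_le_mul_of_nonneg_right (hw i) (norm_nonneg _)
      calc ‖F x (i+1)‖^2 ≤ (C * ‖x i‖)^2 := pow_le_pow_left₀ (norm_nonneg _) this 2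
        _ = C^2 * ‖x i‖^2 := by ring
    have hsucc : Summable (fun i => ‖F x (i+1)‖^(2:ℕ)) :=
      Summable.of_nonneg_of_le (fun i => by positivity) hle hs
    have hsum : Summable (fun j => ‖F x j‖^(2:ℕ)) := by
      rw [← summable_nat_add_iff 1]; exact hsucc
    refine ⟨hsum, ?_⟩
    have h0 : ‖F x 0‖^(2:ℕ) = 0 := by simp [hF]
    rw [Summable.tsum_eq_zero_add hsum, h0, zero_add]
    rw [← tsum_mul_left]
    exact Summable.tsum_le_tsum hle hsucc hs
  have hmem : ∀ x : L2N, Memℓp (F x) 2 := fun x => memℓp_two_of (key x).1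
  let L : L2N →ₗ[ℂ] L2N :=
    { toFun := fun x => ⟨F x, hmem x⟩
      map_add' := fun x y => by
        apply lp.ext; funext j
        simp only [lp.coeFn_add, Pi.add_apply]
        cases j with
        | zero => simp [hF]
        | succ i => simp only [hF, lp.coeFn_add, Pi.add_apply]; exact mul_add _ _ _
      map_smul' := fun c x => by
        apply lp.ext; funext j
        simp only [lp.coeFn_smul, Pi.smul_apply, RingHom.id_apply, smul_eq_mul]
        cases j with
        | zero => simp [hF]
        | succ i => simp only [hF, lp.coeFn_smul, Pi.smul_apply, smul_eq_mul]; ring }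
  have hnorm : ∀ x : L2N, ‖L x‖ ≤ C * ‖x‖ := by
    intro x
    apply lp2_norm_le _ _ (mul_nonneg hC (norm_nonneg _))
    calc (∑' j, ‖F x j‖^(2:ℕ)) ≤ C^2 * ∑' i, ‖x i‖^(2:ℕ) := (key x).2
      _ = C^2 * ‖x‖^2 := by
          congr 1
          have := lp.norm_rpow_eq_tsum (p := 2) (by norm_num) x
          simp only [rpow_two_eq'] at this
          exact this.symm
      _ = (C * ‖x‖)^2 := by ring
  exact ⟨L.mkContinuous C hnorm, L.mkContinuous_norm_le hC _,
    fun x => ⟨rfl, fun j => rfl⟩⟩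

section arith
variable {a : ℝ} (ha : 1 < a) {m : ℕ → ℝ}
  (hm : ∀ k : ℕ, m k = (a ^ (k + 1) - (a ^ (k + 1))⁻¹) / (a - a⁻¹))

include ha

lemma ha0 : (0:ℝ) < a := lt_trans one_pos ha

lemma hD : 0 < a - a⁻¹ := by
  have h0 := ha0 ha
  have : a⁻¹ < 1 := by rw [inv_lt_one_iff₀]; right; exact ha
  linarith

lemma hpow0 (n : ℕ) : (0:ℝ) < a ^ n := pow_pos (ha0 ha) n

lemma hpow1 (n : ℕ) : 1 ≤ a ^ n := one_le_pow₀ ha.le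

lemma hpow1' (n : ℕ) : 1 < a ^ (n+1) := one_lt_pow₀ ha n.succ_ne_zero

-- core inequality for m_ratio_le
lemma core3 {x : ℝ} (hx : a ≤ x) :
    (x*a - (x*a)⁻¹)*(a-a⁻¹) ≤ (a*a - (a*a)⁻¹)*(x - x⁻¹) := by
  have h0 := ha0 ha
  have hx0 : 0 < x := lt_of_lt_of_le h0 hx
  have e : (a*a - (a*a)⁻¹)*(x - x⁻¹) - (x*a - (x*a)⁻¹)*(a-a⁻¹)
      = (x - a*a*x⁻¹)*(1 - a⁻¹*a⁻¹) := by
    field_simp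
    ring
  have h1 : 0 ≤ x - a*a*x⁻¹ := by
    have : a*a*x⁻¹ ≤ x := by
      rw [mul_inv_le_iff₀ hx0]
      nlinarith
    linarith
  have h2 : 0 ≤ 1 - a⁻¹*a⁻¹ := by
    have hai : a⁻¹ ≤ 1 := by rw [inv_le_one_iff₀]; right; exact ha.le
    have hai0 : 0 ≤ a⁻¹ := by positivity
    nlinarith
  nlinarith [mul_nonneg h1 h2]

lemma core4 {x : ℝ} (hx : 0 < x) :
    a*a*(x - x⁻¹) ≤ x*(a*a) - (x*(a*a))⁻¹ := by
  have h0 := ha0 ha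
  have e : x*(a*a) - (x*(a*a))⁻¹ - a*a*(x - x⁻¹)
      = x⁻¹*(a*a - a⁻¹*a⁻¹) := by field_simp; ring
  have h2 : 0 ≤ a*a - a⁻¹*a⁻¹ := by
    have hai : a⁻¹ ≤ 1 := by rw [inv_le_one_iff₀]; right; exact ha.le
    have hai0 : 0 ≤ a⁻¹ := by positivity
    nlinarith
  nlinarith [mul_nonneg (inv_pos.mpr hx).le h2]

lemma core5 {y : ℝ} (hy : 1 ≤ y) :
    y*(a - a⁻¹) ≤ y*a - (y*a)⁻¹ := by
  have h0 := ha0 ha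
  have hy0 : 0 < y := lt_of_lt_of_le one_pos hy
  have e : y*a - (y*a)⁻¹ - y*(a - a⁻¹) = a⁻¹*(y - y⁻¹) := by field_simp; ring
  have h1 : 0 ≤ y - y⁻¹ := by
    have : y⁻¹ ≤ 1 := by rw [inv_le_one_iff₀]; right; exact hy
    linarith
  nlinarith [mul_nonneg (inv_pos.mpr h0).le h1]

include hm

lemma mD (k : ℕ) : m k * (a - a⁻¹) = a ^ (k+1) - (a ^ (k+1))⁻¹ := by
  rw [hm k, div_mul_cancel₀ _ (hD ha).ne']

lemma m_pos (k : ℕ) : 0 < m k := by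
  rw [hm k]
  apply div_pos _ (hD ha)
  have h1 : 1 < a ^ (k+1) := hpow1' ha k
  have : (a ^ (k+1))⁻¹ < 1 := by rw [inv_lt_one_iff₀]; right; exact h1
  linarith

lemma m_mono (k : ℕ) : m k ≤ m (k+1) := by
  rw [hm k, hm (k+1), div_le_div_iff_of_pos_right (hD ha)]
  have hx0 : 0 < a ^ (k+1) := hpow0 ha (k+1)
  have hy : a ^ (k+1) ≤ a ^ (k+2) := pow_le_pow_right₀ ha.le (by omega)
  have : (a ^ (k+2))⁻¹ ≤ (a ^ (k+1))⁻¹ := inv_anti₀ hx0 hy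
  linarith

lemma m_ratio_le (k : ℕ) : m (k+1) ≤ m 1 * m k := by
  have hDp := hD ha
  have hxa : a ≤ a ^ (k+1) := by
    calc a = a ^ 1 := (pow_one a).symm
    _ ≤ a ^ (k+1) := pow_le_pow_right₀ ha.le (by omega)
  apply le_of_mul_le_mul_right _ (mul_pos hDp hDp)
  calc m (k+1) * ((a-a⁻¹)*(a-a⁻¹)) = (m (k+1) * (a-a⁻¹)) * (a-a⁻¹) := by ring
    _ = (a^(k+2) - (a^(k+2))⁻¹) * (a-a⁻¹) := by rw [mD ha hm]
    _ = (a^(k+1)*a - (a^(k+1)*a)⁻¹) * (a-a⁻¹) := by rw [← pow_succ]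
    _ ≤ (a*a - (a*a)⁻¹) * (a^(k+1) - (a^(k+1))⁻¹) := core3 ha hxa
    _ = (a^(0+1+1) - (a^(0+1+1))⁻¹) * (a^(k+1) - (a^(k+1))⁻¹) := by
        rw [show a^(0+1+1) = a*a by ring]
    _ = (m 1 * (a-a⁻¹)) * (m k * (a-a⁻¹)) := by rw [mD ha hm, mD ha hm]
    _ = m 1 * m k * ((a-a⁻¹)*(a-a⁻¹)) := by ring

lemma m_growth (k : ℕ) : a*a*(m k) ≤ m (k+2) := by
  have hDp := hD ha
  have hx0 : 0 < a ^ (k+1) := hpow0 ha (k+1)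
  apply le_of_mul_le_mul_right _ hDp
  calc a*a*(m k) * (a-a⁻¹) = a*a*(m k * (a-a⁻¹)) := by ring
    _ = a*a*(a^(k+1) - (a^(k+1))⁻¹) := by rw [mD ha hm]
    _ ≤ a^(k+1)*(a*a) - (a^(k+1)*(a*a))⁻¹ := core4 ha hx0
    _ = a^(k+3) - (a^(k+3))⁻¹ := by rw [show a^(k+3) = a^(k+1)*(a*a) by ring]
    _ = m (k+2) * (a-a⁻¹) := by rw [mD ha hm]

lemma m_lower (k : ℕ) : a^k ≤ m k := by
  have hDp := hD ha
  apply le_of_mul_le_mul_right _ hDp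
  calc a^k * (a-a⁻¹) ≤ a^k*a - (a^k*a)⁻¹ := core5 ha (hpow1 ha k)
    _ = a^(k+1) - (a^(k+1))⁻¹ := by rw [← pow_succ]
    _ = m k * (a-a⁻¹) := by rw [mD ha hm]

end arith


/-- The standard orthonormal basis vector `e k` of `ℓ²(ℕ; ℂ)`. -/
noncomputable def stdVec (k : ℕ) : L2N := lp.single 2 k (1 : ℂ)

lemma stdVec_apply (k j : ℕ) : stdVec k j = if j = k then 1 else 0 := by
  by_cases h : j = k
  · subst h; simp [stdVec, lp.single_apply_self]
  · simp [stdVec, lp.single_apply_ne 2 k _ h, h]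

lemma single_zero' (i : ℕ) : lp.single 2 i (0:ℂ) = (0 : L2N) := by
  apply lp.ext; funext j
  by_cases h : j = i
  · subst h; rw [lp.single_apply_self]; rfl
  · rw [lp.single_apply_ne 2 i _ h]; rfl

lemma single_eq_smul (i : ℕ) (c : ℂ) : lp.single 2 i c = c • stdVec i := by
  rw [stdVec, ← lp.single_smul, smul_eq_mul, mul_one]

lemma ext_of_basis {T T' : L2N →L[ℂ] L2N}
    (h : ∀ k, T (stdVec k) = T' (stdVec k)) : T = T' := by
  apply ContinuousLinearMap.ext; intro x
  have hx : HasSum (fun i => lp.single 2 i (x i)) x :=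
    lp.hasSum_single (by norm_num) x
  have h1 : HasSum (fun i => T (lp.single 2 i (x i))) (T x) := hx.mapL T
  have h2 : HasSum (fun i => T' (lp.single 2 i (x i))) (T' x) := hx.mapL T'
  have he : ∀ i, T (lp.single 2 i (x i)) = T' (lp.single 2 i (x i)) := by
    intro i
    rw [single_eq_smul, map_smul, map_smul, h i]
  simp only [he] at h1
  exact h1.unique h2

lemma memℓp_geom {f : ℕ → ℂ} {K r : ℝ} (hr0 : 0 ≤ r) (hr : r < 1)
    (hb : ∀ j, ‖f j‖ ≤ K * r^j) : Memℓp f 2 := by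
  apply memℓp_two_of
  have hs : Summable (fun j : ℕ => K^2 * (r^2)^j) := by
    apply Summable.mul_left
    exact summable_geometric_of_lt_one (by positivity) (by nlinarith)
  apply Summable.of_nonneg_of_le (fun j => by positivity) (fun j => ?_) hs
  calc ‖f j‖^2 ≤ (K * r^j)^2 := pow_le_pow_left₀ (norm_nonneg _) (hb j) 2
    _ = K^2 * (r^2)^j := by rw [mul_pow, ← pow_mul, mul_comm j 2, pow_mul]

lemma alg1 (p q r t : ℝ) (hp : p ≠ 0) (hq : q ≠ 0) (hr : r ≠ 0) (ht : t ≠ 0) :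
    (p/t) * ((r/q) * (-(q*q) * (t/p)/(q*r))) = -1 := by
  field_simp

lemma alg2 (q r t A : ℝ) (hq : q ≠ 0) (hr : r ≠ 0) (ht : t ≠ 0) :
    (q/t) * (A/(q*r)) = A/(r*t) := by
  field_simp

/-- **Invertibility of the hilbertian model of the target operator `E₂` on the classical
subspace of the quantum Cayley tree of `A_o(Q)`** (key step of Theorem 4.2 of the paper).
Fix `a > 1` and let `m_k = (a^{k+1} − a^{−(k+1)})/(a − a⁻¹)`.  Then there is a unique
bounded operator `T` on `ℓ²(ℕ; ℂ)` satisfying the stated relations; `T` is bijective with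
bounded inverse `S` given by the stated `ℓ²`-convergent series. -/
theorem stmt_5 (a : ℝ) (ha : 1 < a) (m : ℕ → ℝ)
    (hm : ∀ k : ℕ, m k = (a ^ (k + 1) - (a ^ (k + 1))⁻¹) / (a - a⁻¹)) :
    (∃! T : L2N →L[ℂ] L2N, ∀ k : ℕ,
        T (stdVec k) = (Real.sqrt (m 1 / 2) : ℂ) •
          ((Real.sqrt (m k / m (k + 1)) : ℂ) • stdVec (k + 1)
            - (Real.sqrt (m (k + 1) / m k) : ℂ) • stdVec k)) ∧
    ∀ T : L2N →L[ℂ] L2N,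
      (∀ k : ℕ, T (stdVec k) = (Real.sqrt (m 1 / 2) : ℂ) •
          ((Real.sqrt (m k / m (k + 1)) : ℂ) • stdVec (k + 1)
            - (Real.sqrt (m (k + 1) / m k) : ℂ) • stdVec k)) →
      Function.Bijective T ∧
      ∃ S : L2N →L[ℂ] L2N, (∀ x, S (T x) = x) ∧ (∀ x, T (S x) = x) ∧
        ∀ k : ℕ, HasSum
          (fun i : ℕ => if k ≤ i then
              ((-(m k) * Real.sqrt (2 / m 1) / Real.sqrt (m i * m (i + 1)) : ℝ) : ℂ) • stdVec i
            else 0)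
          (S (stdVec k)) := by
  have h0 : (0:ℝ) < a := ha0 ha
  have hmp : ∀ k, 0 < m k := m_pos ha hm
  -- square roots
  set s : ℕ → ℝ := fun i => Real.sqrt (m i) with hs_def
  have hsp : ∀ i, 0 < s i := fun i => Real.sqrt_pos.mpr (hmp i)
  have hss : ∀ i, s i * s i = m i := fun i => Real.mul_self_sqrt (hmp i).le
  set u : ℝ := Real.sqrt (m 1 / 2) with hu_def
  set c : ℕ → ℝ := fun k => Real.sqrt (m k / m (k+1)) with hc_def
  set d : ℕ → ℝ := fun k => Real.sqrt (m (k+1) / m k) with hd_def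
  set wgt : ℕ → ℝ := fun k => Real.sqrt (m k / m (k+2)) with hw_def
  have hsqrt2 : (0:ℝ) < Real.sqrt 2 := by positivity
  have hu : u = s 1 / Real.sqrt 2 := by
    rw [hu_def, Real.sqrt_div (hmp 1).le]
  have hc : ∀ k, c k = s k / s (k+1) := fun k => by
    rw [hc_def]; exact Real.sqrt_div (hmp k).le _
  have hd : ∀ k, d k = s (k+1) / s k := fun k => by
    rw [hd_def]; exact Real.sqrt_div (hmp (k+1)).le _
  have hw : ∀ k, wgt k = s k / s (k+2) := fun k => by
    rw [hw_def]; exact Real.sqrt_div (hmp k).le _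
  have hdpos : ∀ k, 0 < d k := fun k => by
    rw [hd k]; exact div_pos (hsp (k+1)) (hsp k)
  have hdone : ∀ k, 1 ≤ d k := by
    intro k
    rw [hd_def]
    rw [show (1:ℝ) = Real.sqrt 1 from Real.sqrt_one.symm]
    apply Real.sqrt_le_sqrt
    rw [le_div_iff₀ (hmp k), one_mul]
    exact m_mono ha hm k
  have hupos : 0 < u := by rw [hu]; exact div_pos (hsp 1) hsqrt2
  -- bounds
  have hdbd : ∀ k, |d k| ≤ Real.sqrt (m 1) := by
    intro k
    rw [abs_of_nonneg (hdpos k).le, hd_def]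
    apply Real.sqrt_le_sqrt
    rw [div_le_iff₀ (hmp k)]
    exact m_ratio_le ha hm k
  have hdibd : ∀ k, |(d k)⁻¹| ≤ (1:ℝ) := by
    intro k
    rw [abs_of_nonneg (inv_pos.mpr (hdpos k)).le]
    exact inv_le_one_of_one_le₀ (hdone k)
  have hwbd : ∀ k, |wgt k| ≤ a⁻¹ := by
    intro k
    have : 0 ≤ wgt k := Real.sqrt_nonneg _
    rw [abs_of_nonneg this, hw_def]
    rw [show a⁻¹ = Real.sqrt ((a⁻¹)^2) from (Real.sqrt_sq (by positivity)).symm]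
    apply Real.sqrt_le_sqrt
    rw [div_le_iff₀ (hmp (k+2))]
    rw [show (a⁻¹)^2 * m (k+2) = (a*a*(m k) + (m (k+2) - a*a*m k)) * ((a⁻¹)^2) by ring]
    have hg := m_growth ha hm k
    have : (a*a) * (a⁻¹)^2 = 1 := by field_simp
    nlinarith [hmp k, sq_nonneg a⁻¹, inv_pos.mpr h0]
  -- operators
  obtain ⟨Dd, hDdn, hDd⟩ := exists_diag d (Real.sqrt (m 1)) (Real.sqrt_nonneg _) hdbd
  obtain ⟨Di, hDin, hDi⟩ := exists_diag (fun k => (d k)⁻¹) 1 one_pos.le hdibd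
  obtain ⟨N, hNn, hN⟩ := exists_shift wgt a⁻¹ (by positivity) hwbd
  set T₀ : L2N →L[ℂ] L2N := (-(u:ℂ)) • (Dd * (1 - N)) with hT0_def
  have hT0 : ∀ (x : L2N) (j : ℕ), T₀ x j = -(u:ℂ) * (d j) * (x j - N x j) := by
    intro x j
    rw [hT0_def]
    rw [ContinuousLinearMap.smul_apply]
    rw [lp.coeFn_smul, Pi.smul_apply, smul_eq_mul]
    rw [ContinuousLinearMap.mul_apply, hDd]
    have : ((1 - N) x : L2N) j = x j - N x j := by
      rw [ContinuousLinearMap.sub_apply, ContinuousLinearMap.one_apply,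
        lp.coeFn_sub, Pi.sub_apply]
    rw [this]; ring
  -- T₀ satisfies basis property
  have key_dw : ∀ k, d (k+1) * wgt k = c k := by
    intro k
    rw [hd, hw, hc]
    have h1 := (hsp k).ne'
    have h2 := (hsp (k+1)).ne'
    have h3 := (hsp (k+2)).ne'
    field_simp
  have hP : ∀ k, T₀ (stdVec k) = (u:ℂ) • ((c k:ℂ) • stdVec (k+1) - (d k:ℂ) • stdVec k) := by
    intro k
    apply lp.ext; funext j
    have hrhs : ((u:ℂ) • ((c k:ℂ) • stdVec (k+1) - (d k:ℂ) • stdVec k)) j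
        = (u:ℂ) * ((c k:ℂ) * (stdVec (k+1) j) - (d k:ℂ) * (stdVec k j)) := by
      rw [lp.coeFn_smul, Pi.smul_apply, smul_eq_mul, lp.coeFn_sub, Pi.sub_apply,
        lp.coeFn_smul, Pi.smul_apply, lp.coeFn_smul, Pi.smul_apply, smul_eq_mul, smul_eq_mul]
    have key_dwC : ∀ k', ((d (k'+1) : ℝ) : ℂ) * ((wgt k' : ℝ) : ℂ) = ((c k' : ℝ) : ℂ) := by
      intro k'
      have := key_dw k'
      push_cast [← this]
      ring
    rw [hT0, hrhs]
    cases j with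
    | zero =>
      rw [(hN (stdVec k)).1]
      simp only [stdVec_apply]
      by_cases hk : (0:ℕ) = k
      · subst hk
        simp only [if_pos rfl, if_neg (show ¬(0:ℕ) = 0+1 by omega)]
        ring
      · simp only [if_neg hk, if_neg (show ¬(0:ℕ) = k+1 by omega)]
        ring
    | succ i =>
      rw [(hN (stdVec k)).2 i]
      simp only [stdVec_apply]
      by_cases h1 : i + 1 = k
      · subst h1
        simp only [if_pos rfl, if_neg (show ¬i+1 = (i+1)+1 by omega),
          if_neg (show ¬i = i+1 by omega)]
        ring
      · by_cases h2 : i = k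
        · subst h2
          simp only [if_neg h1, if_pos rfl, if_pos (show i+1 = i+1 from rfl),
            if_neg (show ¬i+1 = i by omega)]
          rw [← key_dwC i]
          ring
        · simp only [if_neg h1, if_neg h2, if_neg (show ¬i+1 = k+1 by omega)]
          ring
  -- invertibility of T₀
  have hu_ne : (-(u:ℂ)) ≠ 0 := by
    simp only [ne_eq, neg_eq_zero, Complex.ofReal_eq_zero]
    exact hupos.ne'
  have h1 : IsUnit ((-(u:ℂ)) • (1 : L2N →L[ℂ] L2N)) := by
    refine ⟨⟨(-(u:ℂ)) • 1, (-(u:ℂ))⁻¹ • 1, ?_, ?_⟩, rfl⟩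
    · rw [smul_mul_assoc, one_mul, smul_smul, mul_inv_cancel₀ hu_ne, one_smul]
    · rw [smul_mul_assoc, one_mul, smul_smul, inv_mul_cancel₀ hu_ne, one_smul]
  have hd_ne : ∀ j, ((d j : ℝ) : ℂ) ≠ 0 := fun j => by
    simp only [ne_eq, Complex.ofReal_eq_zero]
    exact (hdpos j).ne'
  have hDdDi : Dd * Di = 1 := by
    apply ContinuousLinearMap.ext; intro x
    apply lp.ext; funext j
    rw [ContinuousLinearMap.mul_apply, hDd, hDi, ContinuousLinearMap.one_apply,
      ← mul_assoc]
    rw [show ((d j:ℝ):ℂ) * (((d j)⁻¹:ℝ):ℂ) = 1 by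
      rw [← Complex.ofReal_mul, mul_inv_cancel₀ (hdpos j).ne', Complex.ofReal_one]]
    rw [one_mul]
  have hDiDd : Di * Dd = 1 := by
    apply ContinuousLinearMap.ext; intro x
    apply lp.ext; funext j
    rw [ContinuousLinearMap.mul_apply, hDi, hDd, ContinuousLinearMap.one_apply,
      ← mul_assoc]
    rw [show (((d j)⁻¹:ℝ):ℂ) * ((d j:ℝ):ℂ) = 1 by
      rw [← Complex.ofReal_mul, inv_mul_cancel₀ (hdpos j).ne', Complex.ofReal_one]]
    rw [one_mul]
  have h2 : IsUnit Dd := ⟨⟨Dd, Di, hDdDi, hDiDd⟩, rfl⟩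
  have h3 : IsUnit (1 - N) := by
    apply isUnit_one_sub_of_norm_lt_one
    refine lt_of_le_of_lt hNn ?_
    rw [inv_lt_one_iff₀]; right; exact ha
  have hT0U : IsUnit T₀ := by
    have he : T₀ = ((-(u:ℂ)) • 1) * (Dd * (1 - N)) := by
      rw [smul_mul_assoc, one_mul, hT0_def]
    rw [he]
    exact h1.mul (h2.mul h3)
  obtain ⟨V, hV⟩ := hT0U
  set S : L2N →L[ℂ] L2N := (↑V⁻¹ : L2N →L[ℂ] L2N) with hS_def
  have hST : ∀ x, S (T₀ x) = x := by
    intro x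
    have h := V.inv_mul
    rw [hV] at h
    calc S (T₀ x) = ((S * T₀) x) := (ContinuousLinearMap.mul_apply _ _ _).symm
      _ = x := by rw [hS_def, h, ContinuousLinearMap.one_apply]
  have hTS : ∀ x, T₀ (S x) = x := by
    intro x
    have h := V.mul_inv
    rw [hV] at h
    calc T₀ (S x) = ((T₀ * S) x) := (ContinuousLinearMap.mul_apply _ _ _).symm
      _ = x := by rw [hS_def, h, ContinuousLinearMap.one_apply]
  -- conclusion
  constructor
  · exact ⟨T₀, hP, fun T hT => ext_of_basis (fun k => by rw [hT k, hP k])⟩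
  intro T hT
  have hTT0 : T = T₀ := ext_of_basis (fun k => by rw [hT k, hP k])
  subst hTT0
  refine ⟨Function.bijective_iff_has_inverse.mpr ⟨S, hST, hTS⟩, S, hST, hTS, ?_⟩
  intro k
  -- identities for the inverse series
  have hsq2m : Real.sqrt (2 / m 1) = Real.sqrt 2 / s 1 := Real.sqrt_div (by norm_num) _
  have hsmul : ∀ i, Real.sqrt (m i * m (i+1)) = s i * s (i+1) :=
    fun i => Real.sqrt_mul (hmp i).le _
  have I1 : ∀ j : ℕ,
      u * (d j * (-(m j) * Real.sqrt (2 / m 1) / Real.sqrt (m j * m (j+1)))) = -1 := by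
    intro j
    rw [hu, hd, hsq2m, hsmul, ← hss j]
    exact alg1 (s 1) (s j) (s (j+1)) (Real.sqrt 2)
      (hsp 1).ne' (hsp j).ne' (hsp (j+1)).ne' hsqrt2.ne'
  have I2 : ∀ i : ℕ,
      wgt i * (-(m k) * Real.sqrt (2 / m 1) / Real.sqrt (m i * m (i+1)))
        = -(m k) * Real.sqrt (2 / m 1) / Real.sqrt (m (i+1) * m (i+2)) := by
    intro i
    rw [hw, hsmul, hsmul]
    exact alg2 (s i) (s (i+1)) (s (i+2)) _
      (hsp i).ne' (hsp (i+1)).ne' (hsp (i+2)).ne'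
  have I1C : ∀ j : ℕ,
      -(u:ℂ) * ((d j : ℝ):ℂ) *
        (((-(m j) * Real.sqrt (2 / m 1) / Real.sqrt (m j * m (j+1)) : ℝ)):ℂ) = 1 := by
    intro j
    have h := I1 j
    have h2 : ((u * (d j * (-(m j) * Real.sqrt (2 / m 1) / Real.sqrt (m j * m (j+1)))) : ℝ) : ℂ)
        = ((-1 : ℝ) : ℂ) := by rw [h]
    push_cast at h2 ⊢
    linear_combination -h2
  have I2C : ∀ i : ℕ,
      ((wgt i : ℝ):ℂ) *
        (((-(m k) * Real.sqrt (2 / m 1) / Real.sqrt (m i * m (i+1)) : ℝ)):ℂ)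
        = (((-(m k) * Real.sqrt (2 / m 1) / Real.sqrt (m (i+1) * m (i+2)) : ℝ)):ℂ) := by
    intro i
    have h := I2 i
    have h2 : ((wgt i * (-(m k) * Real.sqrt (2 / m 1) / Real.sqrt (m i * m (i+1))) : ℝ) : ℂ)
        = ((-(m k) * Real.sqrt (2 / m 1) / Real.sqrt (m (i+1) * m (i+2)) : ℝ) : ℂ) := by rw [h]
    push_cast at h2
    push_cast
    linear_combination h2
  -- the candidate series sum
  set vf : ℕ → ℂ := fun j => if k ≤ j then
      ((-(m k) * Real.sqrt (2 / m 1) / Real.sqrt (m j * m (j+1)) : ℝ) : ℂ) else 0 with hvf_def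
  have hKnn : (0:ℝ) ≤ m k * Real.sqrt (2 / m 1) :=
    mul_nonneg (hmp k).le (Real.sqrt_nonneg _)
  have hvb : ∀ j, ‖vf j‖ ≤ (m k * Real.sqrt (2 / m 1)) * (a⁻¹)^j := by
    intro j
    rw [hvf_def]
    by_cases hj : k ≤ j
    · simp only [if_pos hj]
      rw [Complex.norm_real, Real.norm_eq_abs]
      have hden : (a:ℝ)^j ≤ Real.sqrt (m j * m (j+1)) := by
        rw [show (a:ℝ)^j = Real.sqrt ((a^j)^2) from (Real.sqrt_sq (by positivity)).symm]
        apply Real.sqrt_le_sqrt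
        have l1 := m_lower ha hm j
        have l2 := m_lower ha hm (j+1)
        have l3 : (a:ℝ)^j ≤ a^(j+1) := pow_le_pow_right₀ ha.le (by omega)
        nlinarith [hpow0 ha j, hpow0 ha (j+1), hmp j, hmp (j+1)]
      have hden0 : (0:ℝ) < Real.sqrt (m j * m (j+1)) :=
        lt_of_lt_of_le (pow_pos h0 j) hden
      rw [abs_div, abs_mul, abs_neg, abs_of_nonneg (hmp k).le,
        abs_of_nonneg (Real.sqrt_nonneg _), abs_of_nonneg (Real.sqrt_nonneg _)]
      rw [div_le_iff₀ hden0]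
      calc m k * Real.sqrt (2 / m 1)
          = (m k * Real.sqrt (2 / m 1)) * ((a⁻¹)^j * a^j) := by
            rw [← mul_pow, inv_mul_cancel₀ h0.ne', one_pow, mul_one]
        _ ≤ (m k * Real.sqrt (2 / m 1)) * ((a⁻¹)^j * Real.sqrt (m j * m (j+1))) := by
            apply mul_le_mul_of_nonneg_left _ hKnn
            exact mul_le_mul_of_nonneg_left hden (by positivity)
        _ = m k * Real.sqrt (2 / m 1) * (a⁻¹)^j * Real.sqrt (m j * m (j+1)) := by ring
    · simp only [if_neg hj, norm_zero]
      positivity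
  have hainv1 : (a:ℝ)⁻¹ < 1 := by rw [inv_lt_one_iff₀]; right; exact ha
  set v : L2N := ⟨vf, memℓp_geom (by positivity) hainv1 hvb⟩ with hv_def
  have hvc : ∀ j, v j = vf j := fun j => rfl
  -- T₀ v = stdVec k
  have hTv : T₀ v = stdVec k := by
    apply lp.ext; funext j
    rw [hT0, stdVec_apply]
    cases j with
    | zero =>
      rw [(hN v).1, hvc, hvf_def]
      by_cases hk : (0:ℕ) = k
      · subst hk
        simp only [if_pos (le_refl 0), if_pos rfl]
        rw [sub_zero]
        exact I1C 0
      · simp only [if_neg (show ¬k ≤ 0 by omega), if_neg hk]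
        ring
    | succ i =>
      rw [(hN v).2 i, hvc, hvc, hvf_def]
      by_cases h1 : i + 1 = k
      · subst h1
        simp only [if_pos (le_refl (i+1)), if_neg (show ¬i+1 ≤ i by omega),
          if_pos rfl]
        rw [mul_zero, sub_zero]
        exact I1C (i+1)
      · by_cases h2 : k ≤ i
        · simp only [if_pos (show k ≤ i+1 by omega), if_pos h2,
            if_neg (show ¬i+1 = k by omega)]
          rw [I2C i]
          ring
        · simp only [if_neg (show ¬k ≤ i+1 by omega), if_neg h2,
            if_neg (show ¬i+1 = k by omega)]
          ring
  -- conclude the HasSum statement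
  have hSe : S (stdVec k) = v := by rw [← hTv, hST v]
  rw [hSe]
  have hbase : HasSum (fun i => lp.single 2 i (v i)) v :=
    lp.hasSum_single (by norm_num) v
  have hfe : (fun i => lp.single 2 i (v i))
      = (fun i : ℕ => if k ≤ i then
          ((-(m k) * Real.sqrt (2 / m 1) / Real.sqrt (m i * m (i + 1)) : ℝ) : ℂ) • stdVec i
        else 0) := by
    funext i
    rw [hvc, hvf_def]
    by_cases hi : k ≤ i
    · simp only [if_pos hi]
      exact single_eq_smul i _
    · simp only [if_neg hi]
      exact single_zero' i
  rw [← hfe]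
  exact hbase
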